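/- Joint distribution matching (Proposition 3): assume E1c (G1 (c, s1)) = c for all (c, s1) ∈ C × S1 and E2c (G2 (c, s2)) = c for all (c, s2) ∈ C × S2. Define the joint translation maps Φ1 : X1 × S2 → X1 × X2, Φ1 (x1, s2) = (x1, G2 (E1c x1, s2)), and Φ2 : X2 × S1 → X1 × X2, Φ2 (x2, s1) = (G1 (E2c x2, s1), x2). Then the two joint distributions coincide: Measure.map Φ1 (p1.prod q2) = Measure.map Φ2 (p2.prod q1) as measures on X1 × X2. -/

import Mathlib

open MeasureTheory

/-- Joint distribution matching (Proposition 3). -/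
theorem joint_distribution_matching
    {X1 X2 C S1 S2 : Type*}
    [MeasurableSpace X1] [MeasurableSpace X2] [MeasurableSpace C]
    [MeasurableSpace S1] [MeasurableSpace S2]
    (E1c : X1 → C) (E2c : X2 → C) (E1s : X1 → S1) (E2s : X2 → S2)
    (G1 : C × S1 → X1) (G2 : C × S2 → X2)
    (hE1c : Measurable E1c) (hE2c : Measurable E2c)
    (hE1s : Measurable E1s) (hE2s : Measurable E2s)
    (hG1 : Measurable G1) (hG2 : Measurable G2)
    (pc : Measure C) (q1 : Measure S1) (q2 : Measure S2)
    [IsProbabilityMeasure pc] [IsProbabilityMeasure q1] [IsProbabilityMeasure q2]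
    (hc1 : ∀ (c : C) (s1 : S1), E1c (G1 (c, s1)) = c)
    (hc2 : ∀ (c : C) (s2 : S2), E2c (G2 (c, s2)) = c) :
    Measure.map (fun p : X1 × S2 => (p.1, G2 (E1c p.1, p.2)))
      ((Measure.map G1 (pc.prod q1)).prod q2)
      = Measure.map (fun p : X2 × S1 => (G1 (E2c p.1, p.2), p.1))
          ((Measure.map G2 (pc.prod q2)).prod q1) := by
  have hΦ1 : Measurable (fun p : X1 × S2 => (p.1, G2 (E1c p.1, p.2))) :=
    measurable_fst.prodMk (hG2.comp ((hE1c.comp measurable_fst).prodMk measurable_snd))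
  have hΦ2 : Measurable (fun p : X2 × S1 => (G1 (E2c p.1, p.2), p.1)) :=
    (hG1.comp ((hE2c.comp measurable_fst).prodMk measurable_snd)).prodMk measurable_fst
  have hL : (Measure.map G1 (pc.prod q1)).prod q2
      = Measure.map (Prod.map G1 id) ((pc.prod q1).prod q2) := by
    conv_lhs => rw [← Measure.map_id (μ := q2)]
    exact Measure.map_prod_map _ _ hG1 measurable_id
  have hR : (Measure.map G2 (pc.prod q2)).prod q1
      = Measure.map (Prod.map G2 id) ((pc.prod q2).prod q1) := by
    conv_lhs => rw [← Measure.map_id (μ := q1)]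
    exact Measure.map_prod_map _ _ hG2 measurable_id
  rw [hL, hR, Measure.map_map hΦ1 (hG1.prodMap measurable_id),
    Measure.map_map hΦ2 (hG2.prodMap measurable_id)]
  have e1 := (measurePreserving_prodAssoc pc q1 q2).symm
  have e2 := (measurePreserving_prodAssoc pc q2 q1).symm
  rw [← e1.map_eq, ← e2.map_eq,
    Measure.map_map (hΦ1.comp (hG1.prodMap measurable_id)) e1.measurable,
    Measure.map_map (hΦ2.comp (hG2.prodMap measurable_id)) e2.measurable]
  have hswap : pc.prod (q2.prod q1)
      = Measure.map (Prod.map (id : C → C) Prod.swap) (pc.prod (q1.prod q2)) :=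
    ((MeasurePreserving.id pc).prod Measure.measurePreserving_swap).map_eq.symm
  rw [hswap, Measure.map_map
    ((hΦ2.comp (hG2.prodMap measurable_id)).comp e2.measurable)
    (measurable_id.prodMap measurable_swap)]
  congr 1
  funext p
  obtain ⟨c, s1, s2⟩ := p
  simp [MeasurableEquiv.prodAssoc, Prod.map, hc1, hc2]
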